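/- Let p : [0,1] → ℝ be continuous and strictly positive, let λ ∈ ℝ, and let u : [0,1] → ℝ be twice continuously differentiable with u(0) = u(1) = 0, u strictly positive on (0,1), and −u''(x) = λ·p(x)·u(x) for all x ∈ [0,1]. If λ = 2π² · ∫₀¹ ( sin²(πx)/p(x) ) dx, then λ > 0 and p(x) = π²/λ for all x ∈ [0,1] (so p is constant). -/

import Mathlib

set_option maxHeartbeats 1000000

open Real Set intervalIntegral MeasureTheory Filter


lemma sin_pi_sq_hasDeriv (x : ℝ) :
    HasDerivAt (fun t : ℝ => t/2 - Real.sin (2*Real.pi*t)/(4*Real.pi))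
      (Real.sin (Real.pi*x)^2) x := by
  have h1 : HasDerivAt (fun t : ℝ => 2*Real.pi*t) (2*Real.pi) x := by
    simpa using (hasDerivAt_id x).const_mul (2*Real.pi)
  have h2 : HasDerivAt (fun t : ℝ => Real.sin (2*Real.pi*t))
      (Real.cos (2*Real.pi*x) * (2*Real.pi)) x := (Real.hasDerivAt_sin _).comp x h1
  have h3 := ((hasDerivAt_id x).div_const 2).sub (h2.div_const (4*Real.pi))
  refine h3.congr_deriv ?_
  have hpi := Real.pi_ne_zero
  have : Real.cos (2*(Real.pi*x)) = 1 - 2*Real.sin (Real.pi*x)^2 := by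
    rw [Real.cos_two_mul', Real.cos_sq']; ring
  have h4 : (2:ℝ)*Real.pi*x = 2*(Real.pi*x) := by ring
  rw [h4, this]
  field_simp
  ring

lemma integral_sin_pi_sq : ∫ x in (0:ℝ)..1, Real.sin (Real.pi*x)^2 = 1/2 := by
  rw [intervalIntegral.integral_eq_sub_of_hasDerivAt (fun x _ => sin_pi_sq_hasDeriv x)]
  · simp [Real.sin_two_pi]
  · apply Continuous.intervalIntegrable; continuity

lemma cos_pi_sq_hasDeriv (x : ℝ) :
    HasDerivAt (fun t : ℝ => Real.pi^2 * (t/2 + Real.sin (2*Real.pi*t)/(4*Real.pi)))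
      ((Real.pi * Real.cos (Real.pi*x))^2) x := by
  have h1 : HasDerivAt (fun t : ℝ => 2*Real.pi*t) (2*Real.pi) x := by
    simpa using (hasDerivAt_id x).const_mul (2*Real.pi)
  have h2 : HasDerivAt (fun t : ℝ => Real.sin (2*Real.pi*t))
      (Real.cos (2*Real.pi*x) * (2*Real.pi)) x := (Real.hasDerivAt_sin _).comp x h1
  have h3 := (((hasDerivAt_id x).div_const 2).add (h2.div_const (4*Real.pi))).const_mul (Real.pi^2)
  refine h3.congr_deriv ?_
  have hpi := Real.pi_ne_zero
  have h4 : (2:ℝ)*Real.pi*x = 2*(Real.pi*x) := by ring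
  have : Real.cos (2*(Real.pi*x)) = 2*Real.cos (Real.pi*x)^2 - 1 := Real.cos_two_mul _
  rw [h4, this]
  field_simp
  ring

lemma integral_cos_pi_sq : ∫ x in (0:ℝ)..1, (Real.pi * Real.cos (Real.pi*x))^2 = Real.pi^2/2 := by
  rw [intervalIntegral.integral_eq_sub_of_hasDerivAt (fun x _ => cos_pi_sq_hasDeriv x)]
  · simp [Real.sin_two_pi]; ring
  · apply Continuous.intervalIntegrable; continuity

lemma sin_pi_pos {x : ℝ} (hx : x ∈ Set.Ioo (0:ℝ) 1) : 0 < Real.sin (Real.pi * x) :=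
  Real.sin_pos_of_pos_of_lt_pi (by nlinarith [Real.pi_pos, hx.1])
    (by nlinarith [Real.pi_pos, hx.2])

lemma aux_vanish (w : ℝ → ℝ) (hw : ContDiff ℝ 2 w) (K : ℝ) (hK : 0 ≤ K)
    (hbd : ∀ x ∈ Set.Icc (0:ℝ) (1/(K+1)), |deriv (deriv w) x| ≤ K * |w x|)
    (hw0 : w 0 = 0) (hw'0 : deriv w 0 = 0) :
    ∀ x ∈ Set.Icc (0:ℝ) (1/(K+1)), w x = 0 := by
  set c : ℝ := 1/(K+1) with hc
  have hK1 : (0:ℝ) < K + 1 := by linarith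
  have hcpos : 0 < c := by positivity
  have h2 : ContDiff ℝ (1+1 : WithTop ℕ∞) w := by
    have : ((2:ℕ) : WithTop ℕ∞) = 1 + 1 := by norm_num
    exact this ▸ hw
  obtain ⟨hw1, -, h1⟩ := contDiff_succ_iff_deriv.mp h2
  obtain ⟨hdw, hcont2⟩ := contDiff_one_iff_deriv.mp h1
  -- sup of |w| on [0,c]
  obtain ⟨ξ, hξmem, hξ⟩ := (isCompact_Icc (a := (0:ℝ)) (b := c)).exists_isMaxOn
    (Set.nonempty_Icc.mpr hcpos.le) (continuous_abs.comp hw1.continuous).continuousOn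
  set M : ℝ := |w ξ| with hM
  have hMnonneg : 0 ≤ M := abs_nonneg _
  -- bound on deriv w on [0,c]
  have hbd1 : ∀ x ∈ Set.Icc (0:ℝ) c, |deriv w x| ≤ K * M * x := by
    intro x hx
    have hint : ∫ t in (0:ℝ)..x, deriv (deriv w) t = deriv w x - deriv w 0 :=
      intervalIntegral.integral_deriv_eq_sub (fun t _ => hdw t)
        (hcont2.intervalIntegrable _ _)
    have := intervalIntegral.norm_integral_le_of_norm_le_const
      (a := (0:ℝ)) (b := x) (C := K * M) (f := deriv (deriv w)) (fun t ht => by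
        rw [Set.uIoc_of_le hx.1] at ht
        have htc : t ∈ Set.Icc (0:ℝ) c := ⟨ht.1.le, ht.2.trans hx.2⟩
        calc ‖deriv (deriv w) t‖ ≤ K * |w t| := hbd t htc
          _ ≤ K * M := by
              have h5 : |w t| ≤ M := hξ htc
              nlinarith [abs_nonneg (w t)])
    rw [hint, hw'0, sub_zero] at this
    simpa [abs_of_nonneg hx.1] using this
  -- bound on w
  have hbd0 : ∀ x ∈ Set.Icc (0:ℝ) c, |w x| ≤ K * M * c * x := by
    intro x hx
    have hint : ∫ t in (0:ℝ)..x, deriv w t = w x - w 0 :=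
      intervalIntegral.integral_deriv_eq_sub (fun t _ => hw1 t)
        ((hdw.continuous).intervalIntegrable _ _)
    have := intervalIntegral.norm_integral_le_of_norm_le_const
      (a := (0:ℝ)) (b := x) (C := K * M * c) (f := deriv w) (fun t ht => by
        rw [Set.uIoc_of_le hx.1] at ht
        have htc : t ∈ Set.Icc (0:ℝ) c := ⟨ht.1.le, ht.2.trans hx.2⟩
        calc ‖deriv w t‖ ≤ K * M * t := hbd1 t htc
          _ ≤ K * M * c := by
              nlinarith [mul_nonneg (mul_nonneg hK hMnonneg) (sub_nonneg.mpr htc.2)])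
    rw [hint, hw0, sub_zero] at this
    simpa [abs_of_nonneg hx.1] using this
  have hMz : M = 0 := by
    have h1 : M ≤ K * M * c * ξ := hbd0 ξ hξmem
    have h2 : ξ ≤ c := hξmem.2
    have hKc : K * c^2 ≤ 1/4 := by
      rw [hc, div_pow, one_pow, mul_one_div, div_le_div_iff₀ (by positivity) (by norm_num)]
      nlinarith [sq_nonneg (K-1)]
    have h0 : 0 ≤ K * M * c := mul_nonneg (mul_nonneg hK hMnonneg) hcpos.le
    have h3 : K * M * c * ξ ≤ K * M * c * c := mul_le_mul_of_nonneg_left h2 h0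
    have h4 : K * c^2 * M ≤ (1/4) * M := mul_le_mul_of_nonneg_right hKc hMnonneg
    nlinarith [hξmem.1, hMnonneg]
  intro x hx
  have := hbd0 x hx
  rw [hMz] at this
  have : |w x| ≤ 0 := by nlinarith [hx.1]
  exact abs_eq_zero.mp (le_antisymm this (abs_nonneg _))

lemma aux_left (w : ℝ → ℝ) (hw1 : Differentiable ℝ w) (hdc : Continuous (deriv w))
    (hw0 : w 0 = 0) (hw'0 : deriv w 0 ≠ 0) (hwne : ∀ x ∈ Set.Ioo (0:ℝ) 1, w x ≠ 0) :
    ContinuousWithinAt (fun x => deriv w x * Real.sin (Real.pi*x)^2 / w x) (Set.Icc 0 1) 0 := by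
  have hF0 : deriv w 0 * Real.sin (Real.pi*0)^2 / w 0 = 0 := by
    simp [hw0]
  have hset : Set.Icc (0:ℝ) 1 \ {0} = Set.Ioc 0 1 := by
    ext x
    simp only [Set.mem_diff, Set.mem_Icc, Set.mem_Ioc, Set.mem_singleton_iff]
    constructor
    · rintro ⟨⟨h1, h2⟩, h3⟩; exact ⟨lt_of_le_of_ne h1 (Ne.symm h3), h2⟩
    · rintro ⟨h1, h2⟩; exact ⟨⟨h1.le, h2⟩, h1.ne'⟩
  rw [← continuousWithinAt_diff_self, hset]
  show Tendsto _ (nhdsWithin 0 (Set.Ioc 0 1)) _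
  have hF0' : (fun x => deriv w x * Real.sin (Real.pi*x)^2 / w x) 0 = 0 := hF0
  rw [hF0', nhdsWithin_Ioc_eq_nhdsGT (by norm_num : (0:ℝ) < 1)]
  -- t1
  have t1 : Tendsto (deriv w) (nhdsWithin 0 (Set.Ioi 0)) (nhds (deriv w 0)) :=
    (hdc.tendsto 0).mono_left nhdsWithin_le_nhds
  -- t2
  have hsin : HasDerivAt (fun x : ℝ => Real.sin (Real.pi*x)^2) 0 0 := by
    have h1 : HasDerivAt (fun x : ℝ => Real.pi*x) Real.pi 0 := by
      simpa using (hasDerivAt_id (0:ℝ)).const_mul Real.pi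
    have h2 : HasDerivAt (fun x : ℝ => Real.sin (Real.pi*x))
        (Real.cos (Real.pi*0) * Real.pi) 0 := (Real.hasDerivAt_sin _).comp 0 h1
    have := h2.pow 2
    refine this.congr_deriv ?_
    simp
  have t2 : Tendsto (fun x => Real.sin (Real.pi*x)^2 / x) (nhdsWithin 0 (Set.Ioi 0)) (nhds 0) := by
    have := hasDerivAt_iff_tendsto_slope.mp hsin
    have h3 : Tendsto (slope (fun x : ℝ => Real.sin (Real.pi*x)^2) 0)
        (nhdsWithin 0 (Set.Ioi 0)) (nhds 0) :=
      this.mono_left (nhdsWithin_mono 0 (fun x hx => Set.mem_compl_singleton_iff.mpr (ne_of_gt hx)))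
    apply h3.congr
    intro x
    simp [slope_fun_def]
    ring
  -- t3
  have hslope : Tendsto (fun x => w x / x) (nhdsWithin 0 (Set.Ioi 0)) (nhds (deriv w 0)) := by
    have := hasDerivAt_iff_tendsto_slope.mp (hw1 0).hasDerivAt
    have h3 := this.mono_left (nhdsWithin_mono 0
      (fun x hx => Set.mem_compl_singleton_iff.mpr (ne_of_gt (α := ℝ) hx)))
    apply h3.congr
    intro x
    simp [slope_fun_def, hw0]
    ring
  have t3 : Tendsto (fun x => x / w x) (nhdsWithin 0 (Set.Ioi 0)) (nhds (deriv w 0)⁻¹) := by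
    have h4 := hslope.inv₀ hw'0
    apply h4.congr'
    filter_upwards [Ioo_mem_nhdsGT_of_mem (Set.left_mem_Ico.mpr (by norm_num : (0:ℝ) < 1))]
      with x hx
    rw [inv_div]
  -- combine
  have tall := (t1.mul t2).mul t3
  rw [mul_zero, zero_mul] at tall
  apply tall.congr'
  filter_upwards [Ioo_mem_nhdsGT_of_mem (Set.left_mem_Ico.mpr (by norm_num : (0:ℝ) < 1))]
    with x hx
  have hx0 : x ≠ 0 := ne_of_gt hx.1
  have hwx : w x ≠ 0 := hwne x hx
  field_simp

/-- Dirichlet corollary of the Rayleigh-quotient Ambarzumyan-type theorem with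
comparison density p̃ ≡ 1 (lowest Dirichlet eigenvalue π², eigenfunction sin(πx)). -/
theorem stmt_5 (p : ℝ → ℝ) (hp : Continuous p)
    (hppos : ∀ x ∈ Set.Icc (0:ℝ) 1, 0 < p x)
    (l : ℝ) (u : ℝ → ℝ) (hu : ContDiff ℝ 2 u)
    (hu0 : u 0 = 0) (hu1 : u 1 = 0)
    (hupos : ∀ x ∈ Set.Ioo (0:ℝ) 1, 0 < u x)
    (hode : ∀ x ∈ Set.Icc (0:ℝ) 1, -(deriv (deriv u) x) = l * p x * u x)
    (hl : l = 2 * Real.pi ^ 2 * ∫ x in (0:ℝ)..1, Real.sin (Real.pi * x) ^ 2 / p x) :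
    0 < l ∧ ∀ x ∈ Set.Icc (0:ℝ) 1, p x = Real.pi ^ 2 / l := by
  have hπ := Real.pi_pos
  -- regularity of u
  have h2 : ContDiff ℝ (1+1 : WithTop ℕ∞) u := by
    have h21 : ((2:ℕ) : WithTop ℕ∞) = 1 + 1 := by norm_num
    exact h21 ▸ hu
  obtain ⟨hu1d, -, h1'⟩ := contDiff_succ_iff_deriv.mp h2
  obtain ⟨hdu, hcont2⟩ := contDiff_one_iff_deriv.mp h1'
  have hucont : Continuous u := hu1d.continuous
  have hdcont : Continuous (deriv u) := hdu.continuous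
  obtain ⟨a, ha⟩ : ∃ a : ℝ, a = ∫ x in (0:ℝ)..1, Real.sin (Real.pi * x) ^ 2 / p x := ⟨_, rfl⟩
  obtain ⟨b, hb⟩ : ∃ b : ℝ, b = ∫ x in (0:ℝ)..1, p x * Real.sin (Real.pi * x) ^ 2 := ⟨_, rfl⟩
  rw [← ha] at hl
  have h01 : (0:ℝ) ≤ 1 := by norm_num
  have hpIcc : ∀ x ∈ Set.uIcc (0:ℝ) 1, p x ≠ 0 := by
    intro x hx; rw [Set.uIcc_of_le h01] at hx; exact (hppos x hx).ne'
  have hinta : IntervalIntegrable (fun x => Real.sin (Real.pi * x) ^ 2 / p x) volume 0 1 :=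
    (ContinuousOn.div (by fun_prop) hp.continuousOn hpIcc).intervalIntegrable
  have hintb : IntervalIntegrable (fun x => p x * Real.sin (Real.pi * x) ^ 2) volume 0 1 :=
    (by fun_prop : Continuous fun x => p x * Real.sin (Real.pi * x) ^ 2).intervalIntegrable 0 1
  have hapos : 0 < a := by
    rw [ha]
    refine intervalIntegral_pos_of_pos_on hinta (fun x hx => ?_) (by norm_num)
    have h3 := sin_pi_pos hx
    have h4 := hppos x (Set.Ioo_subset_Icc_self hx)
    positivity
  have hbpos : 0 < b := by
    rw [hb]
    refine intervalIntegral_pos_of_pos_on hintb (fun x hx => ?_) (by norm_num)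
    have h3 := sin_pi_pos hx
    have h4 := hppos x (Set.Ioo_subset_Icc_self hx)
    positivity
  have hlpos : 0 < l := by
    rw [hl]
    exact mul_pos (by positivity) hapos
  refine ⟨hlpos, ?_⟩
  -- bound on u''
  obtain ⟨ξp, hξpmem, hξp⟩ := (isCompact_Icc (a := (0:ℝ)) (b := 1)).exists_isMaxOn
    (Set.nonempty_Icc.mpr h01) (continuous_abs.comp hp).continuousOn
  set K : ℝ := |l| * |p ξp| with hKdef
  have hK0 : 0 ≤ K := mul_nonneg (abs_nonneg _) (abs_nonneg _)
  have hc1 : 1/(K+1) ≤ 1 := by rw [div_le_one (by linarith)]; linarith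
  have hcpos : 0 < 1/(K+1) := by positivity
  have ubound : ∀ x ∈ Set.Icc (0:ℝ) 1, |deriv (deriv u) x| ≤ K * |u x| := by
    intro x hx
    have h3 : deriv (deriv u) x = -(l * p x * u x) := by linarith [hode x hx]
    rw [h3, abs_neg, abs_mul, abs_mul, hKdef]
    have h4 : |p x| ≤ |p ξp| := hξp hx
    exact mul_le_mul_of_nonneg_right (mul_le_mul_of_nonneg_left h4 (abs_nonneg l))
      (abs_nonneg (u x))
  -- nonvanishing of deriv u at the endpoints
  have hu'0 : deriv u 0 ≠ 0 := by
    intro h0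
    have hv := aux_vanish u hu K hK0
      (fun x hx => ubound x ⟨hx.1, hx.2.trans hc1⟩) hu0 h0
    have hx0 : (1/(K+1))/2 ∈ Set.Ioo (0:ℝ) 1 := ⟨by positivity, by linarith⟩
    exact (hupos _ hx0).ne' (hv _ ⟨by positivity, by linarith⟩)
  set w : ℝ → ℝ := fun x => u (1 - x) with hwdef
  have hwC : ContDiff ℝ 2 w := hu.comp (contDiff_const.sub contDiff_id)
  have hdw : ∀ x, deriv w x = -deriv u (1-x) := fun x => deriv_comp_const_sub u 1 x
  have hdwfun : deriv w = fun x => -deriv u (1-x) := funext hdw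
  have hdw2 : ∀ x, deriv (deriv w) x = deriv (deriv u) (1-x) := by
    intro x
    rw [hdwfun, deriv.fun_neg, deriv_comp_const_sub]
    ring
  have hw0 : w 0 = 0 := by simp [hwdef, hu1]
  have hw1d : Differentiable ℝ w := hwC.differentiable (by norm_num)
  have hdwcont : Continuous (deriv w) := by rw [hdwfun]; fun_prop
  have hu'1 : deriv u 1 ≠ 0 := by
    intro h0
    have hwbd : ∀ x ∈ Set.Icc (0:ℝ) (1/(K+1)), |deriv (deriv w) x| ≤ K * |w x| := by
      intro x hx
      rw [hdw2]
      exact ubound (1-x) ⟨by linarith [hx.2, hc1], by linarith [hx.1]⟩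
    have hv := aux_vanish w hwC K hK0 hwbd hw0 (by rw [hdw]; simp [h0])
    have hx0 : 1 - (1/(K+1))/2 ∈ Set.Ioo (0:ℝ) 1 := ⟨by linarith, by linarith⟩
    have := hv ((1/(K+1))/2) ⟨by positivity, by linarith⟩
    simp only [hwdef] at this
    exact (hupos _ hx0).ne' this
  -- the Picone auxiliary function F
  set F : ℝ → ℝ := fun x => deriv u x * Real.sin (Real.pi*x)^2 / u x with hFdef
  have huIoo : ∀ x ∈ Set.Ioo (0:ℝ) 1, u x ≠ 0 := fun x hx => (hupos x hx).ne'
  have hwIoo : ∀ x ∈ Set.Ioo (0:ℝ) 1, w x ≠ 0 := by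
    intro x hx
    simp only [hwdef]
    exact huIoo (1-x) ⟨by linarith [hx.2], by linarith [hx.1]⟩
  have hFc : ContinuousOn F (Set.Icc 0 1) := by
    intro x hx
    rcases eq_or_lt_of_le hx.1 with h0 | h0
    · rw [← h0]
      exact aux_left u hu1d hdcont hu0 hu'0 huIoo
    rcases eq_or_lt_of_le hx.2 with h1 | h1
    · rw [h1]
      have hGc : ContinuousWithinAt
          (fun x => deriv w x * Real.sin (Real.pi*x)^2 / w x) (Set.Icc 0 1) ((1:ℝ) - 1) := by
        rw [show (1:ℝ) - 1 = 0 by norm_num]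
        exact aux_left w hw1d hdwcont hw0 (by rw [hdw]; simpa using hu'1) hwIoo
      have hr : ContinuousWithinAt (fun x : ℝ => 1 - x) (Set.Icc (0:ℝ) 1) 1 :=
        ((continuous_const.sub continuous_id).continuousWithinAt)
      have hmaps : Set.MapsTo (fun x : ℝ => 1 - x) (Set.Icc 0 1) (Set.Icc 0 1) := by
        intro y hy
        have hyy : (fun x : ℝ => 1 - x) y = 1 - y := rfl
        rw [Set.mem_Icc] at hy ⊢
        rw [hyy]
        exact ⟨by linarith [hy.2], by linarith [hy.1]⟩
      have hcomp := (hGc.comp hr hmaps).neg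
      have hFG : ∀ y : ℝ, F y = -(deriv w (1-y) * Real.sin (Real.pi*(1-y))^2 / w (1-y)) := by
        intro y
        simp only [hFdef, hwdef, hdw]
        rw [deriv_comp_const_sub, show (1:ℝ) - (1 - y) = y by ring,
            show Real.pi * (1 - y) = Real.pi - Real.pi * y by ring, Real.sin_pi_sub]
        ring
      exact hcomp.congr (fun y _ => hFG y) (hFG 1)
    · apply ContinuousAt.continuousWithinAt
      apply ContinuousAt.div (by fun_prop) hucont.continuousAt (huIoo x ⟨h0, h1⟩)
  -- the primitive Φ
  set q : ℝ → ℝ := fun t => (Real.pi * Real.cos (Real.pi*t))^2 - l * p t * Real.sin (Real.pi*t)^2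
    with hq
  have hqc : Continuous q := by rw [hq]; fun_prop
  set Φ : ℝ → ℝ := fun x => ∫ t in (0:ℝ)..x, q t with hΦ
  have hΦc : Continuous Φ := by
    rw [hΦ]
    exact intervalIntegral.continuous_primitive (fun a b => hqc.intervalIntegrable a b) 0
  have hΦd : ∀ x : ℝ, HasDerivAt Φ (q x) x := by
    intro x
    rw [hΦ]
    exact intervalIntegral.integral_hasDerivAt_right (hqc.intervalIntegrable _ _)
      (hqc.stronglyMeasurableAtFilter _ _) hqc.continuousAt
  -- derivative of F on the interior
  have key : ∀ x ∈ Set.Ioo (0:ℝ) 1, HasDerivAt F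
      (q x - (Real.pi * Real.cos (Real.pi*x) - deriv u x * Real.sin (Real.pi*x) / u x)^2) x := by
    intro x hx
    have hux := huIoo x hx
    have h3 : HasDerivAt (fun t:ℝ => Real.pi*t) Real.pi x := by
      simpa using (hasDerivAt_id x).const_mul Real.pi
    have h4 : HasDerivAt (fun t => Real.sin (Real.pi*t)) (Real.cos (Real.pi*x)*Real.pi) x :=
      (Real.hasDerivAt_sin _).comp x h3
    have h5 := h4.pow 2
    have h6 := ((hdu x).hasDerivAt.mul h5).div (hu1d x).hasDerivAt hux
    refine h6.congr_deriv ?_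
    have hode' : deriv (deriv u) x = -(l * p x * u x) := by
      linarith [hode x (Set.Ioo_subset_Icc_self hx)]
    rw [hode', hq]
    field_simp
    simp only [Pi.mul_apply, Pi.pow_apply]
    ring
  -- monotonicity of Φ - F  (Picone inequality)
  have hGmono : MonotoneOn (fun x => Φ x - F x) (Set.Icc (0:ℝ) 1) := by
    apply monotoneOn_of_deriv_nonneg (convex_Icc 0 1) (hΦc.continuousOn.sub hFc)
    · intro x hx
      rw [interior_Icc] at hx
      exact ((hΦd x).sub (key x hx)).differentiableAt.differentiableWithinAt
    · intro x hx
      rw [interior_Icc] at hx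
      rw [((hΦd x).sub (key x hx)).deriv]
      have := sq_nonneg (Real.pi * Real.cos (Real.pi*x) - deriv u x * Real.sin (Real.pi*x) / u x)
      linarith
  have hG01 := hGmono (Set.left_mem_Icc.mpr h01) (Set.right_mem_Icc.mpr h01) h01
  have hF0 : F 0 = 0 := by simp [hFdef, hu0]
  have hF1 : F 1 = 0 := by
    simp only [hFdef, mul_one, Real.sin_pi]
    norm_num
  have hΦ0 : Φ 0 = 0 := by rw [hΦ]; exact intervalIntegral.integral_same
  have hΦ1 : 0 ≤ Φ 1 := by
    have h9 : Φ 0 - F 0 ≤ Φ 1 - F 1 := hG01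
    rw [hF0, hF1, hΦ0] at h9
    linarith
  -- the Picone inequality  l * b ≤ π²/2
  have hintq2 : IntervalIntegrable (fun t => l * (p t * Real.sin (Real.pi*t)^2)) volume 0 1 :=
    hintb.const_mul l
  have hintq1 : IntervalIntegrable (fun t => (Real.pi * Real.cos (Real.pi*t))^2) volume 0 1 :=
    (by fun_prop : Continuous fun t => (Real.pi * Real.cos (Real.pi*t))^2).intervalIntegrable 0 1
  have hΦ1val : Φ 1 = Real.pi^2/2 - l * b := by
    rw [hΦ]
    simp only [hq]
    have hqeq : ∀ t : ℝ, (Real.pi * Real.cos (Real.pi*t))^2 - l * p t * Real.sin (Real.pi*t)^2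
        = (Real.pi * Real.cos (Real.pi*t))^2 - l * (p t * Real.sin (Real.pi*t)^2) := by
      intro t; ring
    simp only [hqeq]
    rw [intervalIntegral.integral_sub hintq1 hintq2, integral_cos_pi_sq,
        intervalIntegral.integral_const_mul, ← hb]
  have hlb : l * b ≤ Real.pi^2/2 := by rw [hΦ1val] at hΦ1; linarith
  have hab : a * b ≤ 1/4 := by
    rw [hl] at hlb
    nlinarith [sq_nonneg Real.pi, mul_pos hπ hπ]
  -- equality case of Cauchy-Schwarz
  set r : ℝ := Real.sqrt a * Real.sqrt b with hr
  have hrsq : r^2 = a*b := by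
    rw [hr, mul_pow, Real.sq_sqrt hapos.le, Real.sq_sqrt hbpos.le]
  have hrpos : 0 < r := mul_pos (Real.sqrt_pos.mpr hapos) (Real.sqrt_pos.mpr hbpos)
  have hrhalf : r ≤ 1/2 := by nlinarith
  set g : ℝ → ℝ := fun x => Real.sin (Real.pi*x)^2 * (Real.sqrt b - Real.sqrt a * p x)^2 / p x
    with hg
  have hgc : ContinuousOn g (Set.uIcc (0:ℝ) 1) :=
    ContinuousOn.div (by fun_prop) hp.continuousOn hpIcc
  have hgint : IntervalIntegrable g volume 0 1 := hgc.intervalIntegrable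
  have hgval : ∫ x in (0:ℝ)..1, g x = 2*(a*b) - r := by
    have heq : Set.EqOn g (fun x => b * (Real.sin (Real.pi*x)^2 / p x)
        - (2*r) * Real.sin (Real.pi*x)^2 + a * (p x * Real.sin (Real.pi*x)^2))
        (Set.uIcc (0:ℝ) 1) := by
      intro x hx
      rw [Set.uIcc_of_le h01] at hx
      have hpx := hppos x hx
      have hb1 : Real.sqrt b ^2 = b := Real.sq_sqrt hbpos.le
      have ha1 : Real.sqrt a ^2 = a := Real.sq_sqrt hapos.le
      have expand : (Real.sqrt b - Real.sqrt a * p x)^2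
          = b - 2*r*(p x) + a * p x^2 := by
        rw [hr]; linear_combination hb1 + p x^2 * ha1
      simp only [hg]
      rw [expand]
      field_simp
    rw [intervalIntegral.integral_congr heq]
    rw [intervalIntegral.integral_add ((hinta.const_mul b).sub
      (((by fun_prop : Continuous fun x => Real.sin (Real.pi*x)^2).intervalIntegrable
        (0:ℝ) 1).const_mul (2*r))) (hintb.const_mul a)]
    rw [intervalIntegral.integral_sub (hinta.const_mul b)
      (((by fun_prop : Continuous fun x => Real.sin (Real.pi*x)^2).intervalIntegrable
        (0:ℝ) 1).const_mul (2*r))]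
    rw [intervalIntegral.integral_const_mul, intervalIntegral.integral_const_mul,
        intervalIntegral.integral_const_mul, ← ha, ← hb, integral_sin_pi_sq]
    ring
  have hgle : ∫ x in (0:ℝ)..1, g x ≤ 0 := by
    rw [hgval]
    nlinarith
  have hgge : 0 ≤ ∫ x in (0:ℝ)..1, g x := by
    apply intervalIntegral.integral_nonneg h01
    intro x hx
    have hpx := hppos x hx
    simp only [hg]
    positivity
  have hgzero : ∫ x in (0:ℝ)..1, g x = 0 := le_antisymm hgle hgge
  -- pointwise vanishing of g on (0,1)
  have hgzero_pt : ∀ x ∈ Set.Ioo (0:ℝ) 1, g x = 0 := by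
    by_contra hcon
    push_neg at hcon
    obtain ⟨x₀, hx₀, hgx₀⟩ := hcon
    have hpx₀ := hppos x₀ (Set.Ioo_subset_Icc_self hx₀)
    have hgx₀nonneg : 0 ≤ g x₀ := by simp only [hg]; positivity
    have hgpos : 0 < g x₀ := lt_of_le_of_ne hgx₀nonneg (Ne.symm hgx₀)
    have hgca : ContinuousAt g x₀ := by
      simp only [hg]
      exact ContinuousAt.div (by fun_prop) hp.continuousAt hpx₀.ne'
    have hpre : g ⁻¹' (Set.Ioi 0) ∈ nhds x₀ := hgca (Ioi_mem_nhds hgpos)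
    have hW : g ⁻¹' (Set.Ioi 0) ∩ Set.Ioo 0 1 ∈ nhds x₀ :=
      Filter.inter_mem hpre (isOpen_Ioo.mem_nhds hx₀)
    obtain ⟨lo, hi, hmemW, hsubW⟩ := mem_nhds_iff_exists_Ioo_subset.mp hW
    have hsub2 : Set.Ioo lo hi ⊆ Function.support g ∩ Set.Ioc 0 1 := by
      intro y hy
      obtain ⟨hy1, hy2⟩ := hsubW hy
      exact ⟨Function.mem_support.mpr (ne_of_gt hy1), Set.Ioo_subset_Ioc_self hy2⟩
    have hae : 0 ≤ᵐ[volume.restrict (Set.uIoc (0:ℝ) 1)] g := by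
      have hae2 : ∀ᵐ y ∂(volume.restrict (Set.Ioc (0:ℝ) 1)), 0 ≤ g y := by
        rw [MeasureTheory.ae_restrict_iff' measurableSet_Ioc]
        filter_upwards with y hy
        have hpy := hppos y (Set.Ioc_subset_Icc_self hy)
        simp only [hg]
        positivity
      rw [Set.uIoc_of_le h01]
      exact hae2
    have hlolt : lo < hi := hmemW.1.trans hmemW.2
    have hmeasIoo : (0:ENNReal) < volume (Set.Ioo lo hi) := by
      rw [Real.volume_Ioo]
      exact ENNReal.ofReal_pos.mpr (by linarith)
    have hposint := (intervalIntegral.integral_pos_iff_support_of_nonneg_ae' hae hgint).mpr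
      ⟨by norm_num, lt_of_lt_of_le hmeasIoo (measure_mono hsub2)⟩
    exact absurd hgzero (ne_of_gt hposint)
  -- p is constant on (0,1)
  set c0 : ℝ := Real.sqrt b / Real.sqrt a with hc0
  have hsqa : Real.sqrt a ≠ 0 := (Real.sqrt_pos.mpr hapos).ne'
  have hpIoo : ∀ x ∈ Set.Ioo (0:ℝ) 1, p x = c0 := by
    intro x hx
    have h := hgzero_pt x hx
    have hsin := sin_pi_pos hx
    have hpx := hppos x (Set.Ioo_subset_Icc_self hx)
    have hzero : Real.sqrt b - Real.sqrt a * p x = 0 := by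
      by_contra hne
      have h7 : 0 < (Real.sqrt b - Real.sqrt a * p x)^2 :=
        (sq_nonneg _).lt_of_ne (Ne.symm (pow_ne_zero 2 hne))
      have : 0 < g x := by simp only [hg]; positivity
      exact this.ne' h
    rw [hc0, eq_div_iff hsqa]
    linarith
  have hpc : ∀ x ∈ Set.Icc (0:ℝ) 1, p x = c0 := by
    intro x hx
    rcases eq_or_lt_of_le hx.1 with h0 | h0
    · rw [← h0]
      have t1 : Tendsto p (nhdsWithin 0 (Set.Ioi 0)) (nhds (p 0)) :=
        (hp.tendsto 0).mono_left nhdsWithin_le_nhds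
      have t2 : Tendsto p (nhdsWithin 0 (Set.Ioi 0)) (nhds c0) := by
        apply Filter.Tendsto.congr' _ tendsto_const_nhds
        filter_upwards [Ioo_mem_nhdsGT_of_mem (Set.left_mem_Ico.mpr one_pos)] with y hy
        exact (hpIoo y hy).symm
      exact tendsto_nhds_unique t1 t2
    rcases eq_or_lt_of_le hx.2 with h1 | h1
    · rw [h1]
      have t1 : Tendsto p (nhdsWithin 1 (Set.Iio 1)) (nhds (p 1)) :=
        (hp.tendsto 1).mono_left nhdsWithin_le_nhds
      have t2 : Tendsto p (nhdsWithin 1 (Set.Iio 1)) (nhds c0) := by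
        apply Filter.Tendsto.congr' _ tendsto_const_nhds
        filter_upwards [Ioo_mem_nhdsLT_of_mem (Set.right_mem_Ioc.mpr one_pos)] with y hy
        exact (hpIoo y hy).symm
      exact tendsto_nhds_unique t1 t2
    · exact hpIoo x ⟨h0, h1⟩
  -- conclusion
  have hc0pos : 0 < c0 := by
    rw [← hpc 0 (Set.left_mem_Icc.mpr h01)]
    exact hppos 0 (Set.left_mem_Icc.mpr h01)
  have haval : a = 1/(2*c0) := by
    rw [ha]
    rw [intervalIntegral.integral_congr
      (g := fun x => Real.sin (Real.pi*x)^2 / c0) (fun x hx => by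
        rw [hpc x (by rwa [Set.uIcc_of_le h01] at hx)])]
    rw [intervalIntegral.integral_div, integral_sin_pi_sq]
    field_simp
  have hleq : l = Real.pi^2 / c0 := by
    rw [hl, haval]
    field_simp
  have hc0eq : c0 = Real.pi^2 / l := by
    rw [hleq]
    field_simp
  intro x hx
  rw [hpc x hx, hc0eq]
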